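/- Suppose 𝒦(Σ) + 𝒴 = ℝ^s. Then (Σ,𝒴) is reachable if and only if R(F) = ℝ^n. -/
import Mathlib

open Pointwise

/-- `ℓ`-fold iterate of a set-valued map: `SIter F ℓ x = F^ℓ(x)`. -/
def SIter {E : Type*} (F : E → Set E) : ℕ → E → Set E
  | 0, x => {x}
  | n + 1, x => ⋃ y ∈ SIter F n x, F y

/-- `X(F)`: initial states of infinite solutions of `x_{k+1} ∈ F(x_k)`. -/
def XSet {E : Type*} (F : E → Set E) : Set E :=
  {x | ∃ f : ℕ → E, f 0 = x ∧ ∀ k, f (k + 1) ∈ F (f k)}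

/-- `R(F) = ⋃_{ℓ ≥ 1} F^ℓ(0)`. -/
def RSet {E : Type*} [Zero E] (F : E → Set E) : Set E :=
  ⋃ ℓ ∈ {ℓ : ℕ | 1 ≤ ℓ}, SIter F ℓ 0

/-- The set-valued map `F(x) = Ax + B D^{-1}(𝒴 − Cx)` of the constrained system `(Σ,𝒴)`. -/
def Fmap {n m s : ℕ} (A : Matrix (Fin n) (Fin n) ℝ) (B : Matrix (Fin n) (Fin m) ℝ)
    (C : Matrix (Fin s) (Fin n) ℝ) (D : Matrix (Fin s) (Fin m) ℝ)
    (Y : Set (Fin s → ℝ)) : (Fin n → ℝ) → Set (Fin n → ℝ) :=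
  fun x => {z | ∃ u : Fin m → ℝ, C.mulVec x + D.mulVec u ∈ Y ∧ z = A.mulVec x + B.mulVec u}

/-- The strongly reachable subspace `𝒯*(Σ)`: states reachable from `0` with the output
kept identically zero along the way. -/
def Tstar {n m s : ℕ} (A : Matrix (Fin n) (Fin n) ℝ) (B : Matrix (Fin n) (Fin m) ℝ)
    (C : Matrix (Fin s) (Fin n) ℝ) (D : Matrix (Fin s) (Fin m) ℝ) : Set (Fin n → ℝ) :=
  RSet (Fmap A B C D ({0} : Set (Fin s → ℝ)))

/-- The weakly unobservable subspace `𝒱*(Σ)`: initial states for which an input exists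
making the output identically zero. -/
def Vstar {n m s : ℕ} (A : Matrix (Fin n) (Fin n) ℝ) (B : Matrix (Fin n) (Fin m) ℝ)
    (C : Matrix (Fin s) (Fin n) ℝ) (D : Matrix (Fin s) (Fin m) ℝ) : Set (Fin n → ℝ) :=
  XSet (Fmap A B C D ({0} : Set (Fin s → ℝ)))

/-- `𝒦(Σ) = im D + C 𝒯*(Σ)`. -/
def Kset {n m s : ℕ} (A : Matrix (Fin n) (Fin n) ℝ) (B : Matrix (Fin n) (Fin m) ℝ)
    (C : Matrix (Fin s) (Fin n) ℝ) (D : Matrix (Fin s) (Fin m) ℝ) : Set (Fin s → ℝ) :=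
  {y | ∃ (u : Fin m → ℝ) (t : Fin n → ℝ), t ∈ Tstar A B C D ∧ y = D.mulVec u + C.mulVec t}

/-- The image `im [C D]`. -/
def CDrange {n m s : ℕ} (C : Matrix (Fin s) (Fin n) ℝ) (D : Matrix (Fin s) (Fin m) ℝ) :
    Set (Fin s → ℝ) :=
  Set.range (fun p : (Fin n → ℝ) × (Fin m → ℝ) => C.mulVec p.1 + D.mulVec p.2)

namespace Stmt14

/-- Trajectory of the linear recursion driven by input sequence `q`. -/
def traj {n m : ℕ} (A : Matrix (Fin n) (Fin n) ℝ) (B : Matrix (Fin n) (Fin m) ℝ)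
    (x : Fin n → ℝ) (q : ℕ → Fin m → ℝ) : ℕ → Fin n → ℝ
  | 0 => x
  | k + 1 => A.mulVec (traj A B x q k) + B.mulVec (q k)

theorem traj_congr {n m : ℕ} {A : Matrix (Fin n) (Fin n) ℝ} {B : Matrix (Fin n) (Fin m) ℝ}
    {x : Fin n → ℝ} {q q' : ℕ → Fin m → ℝ} :
    ∀ {k : ℕ}, (∀ j < k, q j = q' j) → traj A B x q k = traj A B x q' k
  | 0, _ => rfl
  | k + 1, h => by
    simp only [traj]
    rw [traj_congr (fun j hj => h j (hj.trans (Nat.lt_succ_self k))), h k (Nat.lt_succ_self k)]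

theorem mem_SIter_iff {α : Type*} (F : α → Set α) :
    ∀ (ℓ : ℕ) (z x : α), z ∈ SIter F ℓ x ↔
      ∃ f : ℕ → α, f 0 = x ∧ (∀ k < ℓ, f (k + 1) ∈ F (f k)) ∧ f ℓ = z := by
  intro ℓ
  induction ℓ with
  | zero =>
    intro z x
    simp only [SIter, Set.mem_singleton_iff]
    constructor
    · rintro rfl; exact ⟨fun _ => z, rfl, fun k hk => absurd hk (Nat.not_lt_zero k), rfl⟩
    · rintro ⟨f, h0, -, hend⟩; rw [← hend, h0]
  | succ ℓ ih =>
    intro z x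
    simp only [SIter, Set.mem_iUnion, exists_prop]
    constructor
    · rintro ⟨y, hy, hz⟩
      obtain ⟨f, h0, hstep, hend⟩ := (ih y x).1 hy
      refine ⟨Function.update f (ℓ + 1) z, ?_, ?_, ?_⟩
      · rw [Function.update_of_ne (by omega)]; exact h0
      · intro k hk
        rcases Nat.lt_or_ge k ℓ with h | h
        · rw [Function.update_of_ne (by omega), Function.update_of_ne (by omega)]
          exact hstep k h
        · have hkℓ : k = ℓ := by omega
          subst hkℓ
          rw [Function.update_self, Function.update_of_ne (by omega), hend]
          exact hz
      · rw [Function.update_self]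
    · rintro ⟨f, h0, hstep, hend⟩
      refine ⟨f ℓ, (ih (f ℓ) x).2 ⟨f, h0, fun k hk => hstep k (by omega), rfl⟩, ?_⟩
      rw [← hend]; exact hstep ℓ (Nat.lt_succ_self ℓ)


theorem mem_SIter_succ {α : Type*} {F : α → Set α} {ℓ : ℕ} {x z : α} :
    z ∈ SIter F (ℓ + 1) x ↔ ∃ y ∈ SIter F ℓ x, z ∈ F y := by
  constructor
  · intro h
    rcases Set.mem_iUnion₂.mp h with ⟨y, hy, hz⟩
    exact ⟨y, hy, hz⟩
  · rintro ⟨y, hy, hz⟩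
    exact Set.mem_iUnion₂.mpr ⟨y, hy, hz⟩

variable {n m s : ℕ} (A : Matrix (Fin n) (Fin n) ℝ) (B : Matrix (Fin n) (Fin m) ℝ)
    (C : Matrix (Fin s) (Fin n) ℝ) (D : Matrix (Fin s) (Fin m) ℝ)

theorem zero_mem_Fmap {Y : Set (Fin s → ℝ)} (h0Y : (0 : Fin s → ℝ) ∈ Y) :
    (0 : Fin n → ℝ) ∈ Fmap A B C D Y 0 := by
  refine ⟨0, ?_, ?_⟩ <;> simp [Matrix.mulVec_zero, h0Y]

theorem SIter_succ_subset {α : Type*} {F : α → Set α} {x0 : α} (h0 : x0 ∈ F x0) :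
    ∀ ℓ, SIter F ℓ x0 ⊆ SIter F (ℓ + 1) x0 := by
  intro ℓ
  induction ℓ with
  | zero =>
    intro z hz
    simp only [SIter, Set.mem_singleton_iff] at hz
    subst hz
    exact mem_SIter_succ.mpr ⟨z, by simp [SIter], h0⟩
  | succ ℓ ih =>
    intro z hz
    rw [mem_SIter_succ] at hz ⊢
    obtain ⟨y, hy, hz⟩ := hz
    exact ⟨y, ih hy, hz⟩

theorem SIter_subset_of_le {α : Type*} {F : α → Set α} {x0 : α} (h0 : x0 ∈ F x0)
    {ℓ ℓ' : ℕ} (h : ℓ ≤ ℓ') : SIter F ℓ x0 ⊆ SIter F ℓ' x0 := by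
  induction ℓ' with
  | zero => have : ℓ = 0 := by omega
            subst this; exact subset_rfl
  | succ ℓ' ih =>
    rcases Nat.lt_or_ge ℓ (ℓ' + 1) with h' | h'
    · exact (ih (by omega)).trans (SIter_succ_subset h0 ℓ')
    · have : ℓ = ℓ' + 1 := by omega
      subst this; exact subset_rfl

theorem SIter_mono_F {α : Type*} {F G : α → Set α} (h : ∀ y, F y ⊆ G y) :
    ∀ ℓ x, SIter F ℓ x ⊆ SIter G ℓ x := by
  intro ℓ
  induction ℓ with
  | zero => intro x; exact subset_rfl
  | succ ℓ ih =>
    intro x z hz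
    rw [mem_SIter_succ] at hz ⊢
    obtain ⟨y, hy, hz⟩ := hz
    exact ⟨y, ih x hy, h y hz⟩

theorem zero_mem_SIter {Y : Set (Fin s → ℝ)} (h0Y : (0 : Fin s → ℝ) ∈ Y) :
    ∀ ℓ, (0 : Fin n → ℝ) ∈ SIter (Fmap A B C D Y) ℓ 0 := by
  intro ℓ
  induction ℓ with
  | zero => simp [SIter]
  | succ ℓ ih =>
    exact mem_SIter_succ.mpr ⟨0, ih, zero_mem_Fmap A B C D h0Y⟩

theorem convex_SIter {Y : Set (Fin s → ℝ)} (hY : Convex ℝ Y) :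
    ∀ ℓ, Convex ℝ (SIter (Fmap A B C D Y) ℓ 0) := by
  intro ℓ
  induction ℓ with
  | zero => exact convex_singleton 0
  | succ ℓ ih =>
    intro z₁ h₁ z₂ h₂ a b ha hb hab
    rw [mem_SIter_succ] at h₁ h₂ ⊢
    obtain ⟨y₁, hy₁, u₁, hu₁, rfl⟩ := h₁
    obtain ⟨y₂, hy₂, u₂, hu₂, rfl⟩ := h₂
    refine ⟨a • y₁ + b • y₂, ih hy₁ hy₂ ha hb hab, a • u₁ + b • u₂, ?_, ?_⟩
    · have heq : C.mulVec (a • y₁ + b • y₂) + D.mulVec (a • u₁ + b • u₂)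
          = a • (C.mulVec y₁ + D.mulVec u₁) + b • (C.mulVec y₂ + D.mulVec u₂) := by
        simp only [Matrix.mulVec_add, Matrix.mulVec_smul]
        module
      rw [heq]
      exact hY hu₁ hu₂ ha hb hab
    · simp only [Matrix.mulVec_add, Matrix.mulVec_smul]
      module

theorem SIter0_add {z₁ z₂ : Fin n → ℝ} :
    ∀ {ℓ}, z₁ ∈ SIter (Fmap A B C D {0}) ℓ 0 → z₂ ∈ SIter (Fmap A B C D {0}) ℓ 0 →
      z₁ + z₂ ∈ SIter (Fmap A B C D ({0} : Set (Fin s → ℝ))) ℓ 0 := by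
  intro ℓ
  induction ℓ generalizing z₁ z₂ with
  | zero =>
    simp only [SIter, Set.mem_singleton_iff]
    rintro rfl rfl; simp
  | succ ℓ ih =>
    intro h₁ h₂
    rw [mem_SIter_succ] at h₁ h₂ ⊢
    obtain ⟨y₁, hy₁, u₁, hu₁, rfl⟩ := h₁
    obtain ⟨y₂, hy₂, u₂, hu₂, rfl⟩ := h₂
    simp only [Set.mem_singleton_iff] at hu₁ hu₂
    refine ⟨y₁ + y₂, ih hy₁ hy₂, u₁ + u₂, ?_, ?_⟩
    · simp only [Set.mem_singleton_iff, Matrix.mulVec_add]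
      rw [show C.mulVec y₁ + C.mulVec y₂ + (D.mulVec u₁ + D.mulVec u₂)
          = (C.mulVec y₁ + D.mulVec u₁) + (C.mulVec y₂ + D.mulVec u₂) by abel, hu₁, hu₂]
      simp
    · simp only [Matrix.mulVec_add]; abel

theorem SIter0_smul {c : ℝ} {z : Fin n → ℝ} :
    ∀ {ℓ}, z ∈ SIter (Fmap A B C D {0}) ℓ 0 →
      c • z ∈ SIter (Fmap A B C D ({0} : Set (Fin s → ℝ))) ℓ 0 := by
  intro ℓ
  induction ℓ generalizing z with
  | zero =>
    simp only [SIter, Set.mem_singleton_iff]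
    rintro rfl; simp
  | succ ℓ ih =>
    intro h
    rw [mem_SIter_succ] at h ⊢
    obtain ⟨y, hy, u, hu, rfl⟩ := h
    simp only [Set.mem_singleton_iff] at hu
    refine ⟨c • y, ih hy, c • u, ?_, ?_⟩
    · simp only [Set.mem_singleton_iff, Matrix.mulVec_smul]
      rw [← smul_add, hu]; simp
    · simp only [Matrix.mulVec_add, Matrix.mulVec_smul]; module

theorem mem_Tstar_iff {τ : Fin n → ℝ} :
    τ ∈ Tstar A B C D ↔ ∃ ℓ, 1 ≤ ℓ ∧ τ ∈ SIter (Fmap A B C D {0}) ℓ 0 := by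
  simp [Tstar, RSet]

theorem zero_mem_Tstar : (0 : Fin n → ℝ) ∈ Tstar A B C D := by
  rw [mem_Tstar_iff]
  exact ⟨1, le_rfl, zero_mem_SIter A B C D (Set.mem_singleton 0) 1⟩

theorem Tstar_add {z₁ z₂ : Fin n → ℝ} (h₁ : z₁ ∈ Tstar A B C D) (h₂ : z₂ ∈ Tstar A B C D) :
    z₁ + z₂ ∈ Tstar A B C D := by
  rw [mem_Tstar_iff] at h₁ h₂ ⊢
  obtain ⟨ℓ₁, hℓ₁, h₁⟩ := h₁
  obtain ⟨ℓ₂, hℓ₂, h₂⟩ := h₂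
  have h0 := zero_mem_Fmap A B C D (Set.mem_singleton (0 : Fin s → ℝ) : (0:Fin s → ℝ) ∈ ({0} : Set (Fin s → ℝ)))
  refine ⟨max ℓ₁ ℓ₂, le_trans hℓ₁ (le_max_left _ _), SIter0_add A B C D ?_ ?_⟩
  · exact SIter_subset_of_le h0 (le_max_left _ _) h₁
  · exact SIter_subset_of_le h0 (le_max_right _ _) h₂

theorem Tstar_smul (c : ℝ) {z : Fin n → ℝ} (h : z ∈ Tstar A B C D) :
    c • z ∈ Tstar A B C D := by
  rw [mem_Tstar_iff] at h ⊢
  obtain ⟨ℓ, hℓ, h⟩ := h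
  exact ⟨ℓ, hℓ, SIter0_smul A B C D h⟩

/-- Stabilization: there is `N ≥ 1` with `𝒯* = F₀^N(0)`. -/
theorem exists_stabN : ∃ N : ℕ, 1 ≤ N ∧
    ∀ τ ∈ Tstar A B C D, τ ∈ SIter (Fmap A B C D ({0} : Set (Fin s → ℝ))) N 0 := by
  have h0 := zero_mem_Fmap A B C D (Set.mem_singleton (0 : Fin s → ℝ) : (0:Fin s → ℝ) ∈ ({0} : Set (Fin s → ℝ)))
  let M : ℕ →o Submodule ℝ (Fin n → ℝ) :=
    ⟨fun ℓ =>
      { carrier := SIter (Fmap A B C D ({0} : Set (Fin s → ℝ))) (ℓ + 1) 0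
        add_mem' := fun h₁ h₂ => SIter0_add A B C D h₁ h₂
        zero_mem' := zero_mem_SIter A B C D (Set.mem_singleton 0) (ℓ + 1)
        smul_mem' := fun c _ h => SIter0_smul A B C D h },
      fun ℓ ℓ' h => SIter_subset_of_le h0 (by omega)⟩
  obtain ⟨N0, hN0⟩ := monotone_stabilizes_iff_noetherian.mpr inferInstance M
  refine ⟨N0 + 1, by omega, ?_⟩
  intro τ hτ
  rw [mem_Tstar_iff] at hτ
  obtain ⟨ℓ, hℓ, hτ⟩ := hτ
  rcases Nat.lt_or_ge ℓ (N0 + 2) with h | h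
  · exact SIter_subset_of_le h0 (by omega) hτ
  · have hτ' : τ ∈ M (ℓ - 1) := by
      show τ ∈ SIter (Fmap A B C D ({0} : Set (Fin s → ℝ))) (ℓ - 1 + 1) 0
      rwa [Nat.sub_add_cancel (by omega)]
    rw [← hN0 (ℓ - 1) (by omega)] at hτ'
    exact hτ'

theorem traj_zero {A : Matrix (Fin n) (Fin n) ℝ} {B : Matrix (Fin n) (Fin m) ℝ}
    {x : Fin n → ℝ} {q : ℕ → Fin m → ℝ} : traj A B x q 0 = x := rfl

theorem traj_succ {A : Matrix (Fin n) (Fin n) ℝ} {B : Matrix (Fin n) (Fin m) ℝ}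
    {x : Fin n → ℝ} {q : ℕ → Fin m → ℝ} {k : ℕ} :
    traj A B x q (k + 1) = A.mulVec (traj A B x q k) + B.mulVec (q k) := rfl

/-- every element of `𝒯*` has a one-step zero-output predecessor in `𝒯*`. -/
theorem Tstar_pre {τ : Fin n → ℝ} (hτ : τ ∈ Tstar A B C D) :
    ∃ p ∈ Tstar A B C D, ∃ q : Fin m → ℝ,
      C.mulVec p + D.mulVec q = 0 ∧ τ = A.mulVec p + B.mulVec q := by
  rw [mem_Tstar_iff] at hτ
  obtain ⟨ℓ, hℓ, hτ⟩ := hτ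
  obtain ⟨ℓ', rfl⟩ : ∃ ℓ', ℓ = ℓ' + 1 := ⟨ℓ - 1, by omega⟩
  rw [mem_SIter_succ] at hτ
  obtain ⟨y, hy, u, hu, rfl⟩ := hτ
  have hyT : y ∈ Tstar A B C D := by
    rcases Nat.eq_zero_or_pos ℓ' with h | h
    · subst h
      simp only [SIter, Set.mem_singleton_iff] at hy
      subst hy
      exact zero_mem_Tstar A B C D
    · exact (mem_Tstar_iff A B C D).mpr ⟨ℓ', h, hy⟩
  exact ⟨y, hyT, u, Set.mem_singleton_iff.mp hu, rfl⟩

theorem chain_exists_aux :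
    ∀ (i : ℕ) (τ : Fin n → ℝ), τ ∈ Tstar A B C D →
    ∃ (p0 : Fin n → ℝ) (q : ℕ → Fin m → ℝ),
      p0 ∈ Tstar A B C D ∧
      (∀ k < i, C.mulVec (traj A B p0 q k) + D.mulVec (q k) = 0) ∧
      (∀ k, i ≤ k → q k = 0) ∧
      traj A B p0 q i = τ := by
  intro i
  induction i with
  | zero =>
    intro τ hτ
    exact ⟨τ, fun _ => 0, hτ, fun k hk => absurd hk (Nat.not_lt_zero k), fun _ _ => rfl, rfl⟩
  | succ i ih =>
    intro τ hτ
    obtain ⟨p', hp', u, hout, heq⟩ := Tstar_pre A B C D hτ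
    obtain ⟨p0, q, hp0, houts, hq0, hend⟩ := ih p' hp'
    obtain ⟨qq, hqq⟩ : ∃ qq : ℕ → Fin m → ℝ, ∀ k, qq k = if k = i then u else q k :=
      ⟨_, fun _ => rfl⟩
    have hcongr : ∀ k, k ≤ i → traj A B p0 qq k = traj A B p0 q k := by
      intro k hk
      exact traj_congr (fun j hj => by rw [hqq j, if_neg (by omega)])
    refine ⟨p0, qq, hp0, ?_, ?_, ?_⟩
    · intro k hk
      rcases Nat.lt_or_ge k i with h | h
      · rw [hcongr k (by omega), hqq k, if_neg (by omega)]
        exact houts k h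
      · have : k = i := by omega
        subst this
        rw [hcongr k le_rfl, hend, hqq k, if_pos rfl]
        exact hout
    · intro k hk
      rw [hqq k, if_neg (by omega)]
      exact hq0 k (by omega)
    · rw [traj_succ, hcongr i le_rfl, hend, hqq i, if_pos rfl]
      exact heq.symm

theorem chain_exists {N : ℕ} (hN : 1 ≤ N)
    (hstab : ∀ τ ∈ Tstar A B C D, τ ∈ SIter (Fmap A B C D ({0} : Set (Fin s → ℝ))) N 0)
    (i : ℕ) (τ : Fin n → ℝ) (hτ : τ ∈ Tstar A B C D) :
    ∃ (p0 : Fin n → ℝ) (q : ℕ → Fin m → ℝ),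
      p0 ∈ Tstar A B C D ∧
      (∀ k < i, C.mulVec (traj A B p0 q k) + D.mulVec (q k) = 0) ∧
      (∀ k, i ≤ k → q k = 0) ∧
      traj A B p0 q i = τ ∧
      (∀ k, k + N ≤ i → traj A B p0 q k = 0) ∧
      (∀ k, k + N < i → q k = 0) := by
  rcases Nat.lt_or_ge i N with hiN | hiN
  · obtain ⟨p0, q, h1, h2, h3, h4⟩ := chain_exists_aux A B C D i τ hτ
    exact ⟨p0, q, h1, h2, h3, h4, fun k hk => absurd hk (by omega),
      fun k hk => absurd hk (by omega)⟩
  · set d := i - N with hd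
    have hdN : d + N = i := by omega
    obtain ⟨f, hf0, hfstep, hfend⟩ := (mem_SIter_iff _ N τ 0).1 (hstab τ hτ)
    have hsel : ∀ k, ∃ u : Fin m → ℝ, k < N →
        (C.mulVec (f k) + D.mulVec u = 0 ∧ f (k + 1) = A.mulVec (f k) + B.mulVec u) := by
      intro k
      rcases Nat.lt_or_ge k N with hk | hk
      · obtain ⟨u, hu, hequ⟩ := hfstep k hk
        exact ⟨u, fun _ => ⟨Set.mem_singleton_iff.mp hu, hequ⟩⟩
      · exact ⟨0, fun h => absurd h (by omega)⟩
    choose u hu using hsel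
    obtain ⟨q, hq⟩ : ∃ q : ℕ → Fin m → ℝ,
        ∀ k, q k = if d ≤ k ∧ k < i then u (k - d) else 0 := ⟨_, fun _ => rfl⟩
    have c1 : ∀ k, k ≤ d → traj A B 0 q k = 0 := by
      intro k
      induction k with
      | zero => intro _; rfl
      | succ k ih =>
        intro hk
        rw [traj_succ, ih (by omega), hq k, if_neg (by omega), Matrix.mulVec_zero,
          Matrix.mulVec_zero, add_zero]
    have c2 : ∀ j, j ≤ N → traj A B 0 q (d + j) = f j := by
      intro j
      induction j with
      | zero => intro _; rw [Nat.add_zero, c1 d le_rfl, hf0]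
      | succ j ih =>
        intro hj
        have e1 : d + (j + 1) = (d + j) + 1 := by omega
        rw [e1, traj_succ, ih (by omega), hq (d + j), if_pos ⟨by omega, by omega⟩,
          Nat.add_sub_cancel_left]
        exact ((hu j (by omega)).2).symm
    refine ⟨0, q, zero_mem_Tstar A B C D, ?_, ?_, ?_, ?_, ?_⟩
    · intro k hk
      rcases Nat.lt_or_ge k d with h | h
      · rw [c1 k (by omega), hq k, if_neg (by omega), Matrix.mulVec_zero, Matrix.mulVec_zero,
          add_zero]
      · obtain ⟨j, rfl⟩ : ∃ j, k = d + j := ⟨k - d, by omega⟩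
        rw [c2 j (by omega), hq (d + j), if_pos ⟨by omega, by omega⟩, Nat.add_sub_cancel_left]
        exact (hu j (by omega)).1
    · intro k hk
      rw [hq k, if_neg (by omega)]
    · rw [← hdN, c2 N le_rfl, hfend]
    · intro k hk
      exact c1 k (by omega)
    · intro k hk
      rw [hq k, if_neg (by omega)]

theorem xset_cover {Y : Set (Fin s → ℝ)} (h0Y : (0 : Fin s → ℝ) ∈ Y)
    (hK : Kset A B C D + Y = Set.univ) (x : Fin n → ℝ) :
    ∃ t ∈ Tstar A B C D, x + t ∈ XSet (Fmap A B C D Y) := by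
  obtain ⟨N, hN1, hstab⟩ := exists_stabN A B C D
  have hKneg : ∀ o : Fin s → ℝ, ∃ (v : Fin m → ℝ) (τ : Fin n → ℝ),
      τ ∈ Tstar A B C D ∧ o + (C.mulVec τ + D.mulVec v) ∈ Y := by
    intro o
    have ho : o ∈ Kset A B C D + Y := by rw [hK]; trivial
    obtain ⟨kk, hkk, y, hy, hky⟩ := Set.mem_add.mp ho
    obtain ⟨uu, t, ht, rfl⟩ := hkk
    have hnt : -t ∈ Tstar A B C D := by
      have := Tstar_smul A B C D (-1) ht
      rwa [neg_one_smul] at this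
    refine ⟨-uu, -t, hnt, ?_⟩
    have hyq : o + (C.mulVec (-t) + D.mulVec (-uu)) = y := by
      rw [Matrix.mulVec_neg, Matrix.mulVec_neg, ← hky]
      abel
    rw [hyq]
    exact hy
  have step : ∀ (S : (ℕ → Fin n → ℝ) × (ℕ → Fin m → ℝ)) (i : ℕ),
      ∃ (p0 : Fin n → ℝ) (qq : ℕ → Fin m → ℝ),
        p0 ∈ Tstar A B C D ∧
        (∀ k < i, C.mulVec (traj A B p0 qq k) + D.mulVec (qq k) = 0) ∧
        (C.mulVec (S.1 i) + D.mulVec (S.2 i)) +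
          (C.mulVec (traj A B p0 qq i) + D.mulVec (qq i)) ∈ Y ∧
        (∀ k, k + N ≤ i → traj A B p0 qq k = 0) ∧
        (∀ k, k + N < i → qq k = 0) := by
    intro S i
    obtain ⟨v, τ, hτ, hy⟩ := hKneg (C.mulVec (S.1 i) + D.mulVec (S.2 i))
    obtain ⟨p0, q, hp0, hout, hq0, htr, h5, h5'⟩ := chain_exists A B C D hN1 hstab i τ hτ
    obtain ⟨qq, hqq⟩ : ∃ qq : ℕ → Fin m → ℝ, ∀ k, qq k = if k = i then v else q k :=
      ⟨_, fun _ => rfl⟩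
    have hcongr : ∀ k, k ≤ i → traj A B p0 qq k = traj A B p0 q k := by
      intro k hk
      exact traj_congr (fun j hj => by rw [hqq j, if_neg (by omega)])
    refine ⟨p0, qq, hp0, ?_, ?_, ?_, ?_⟩
    · intro k hk
      rw [hcongr k (by omega), hqq k, if_neg (by omega)]
      exact hout k hk
    · rw [hcongr i le_rfl, htr, hqq i, if_pos rfl]
      exact hy
    · intro k hk
      rw [hcongr k (by omega)]
      exact h5 k hk
    · intro k hk
      rw [hqq k, if_neg (by omega)]
      exact h5' k hk
  choose P0 QQ hs1 hs2 hs3 hs4 hs5 using step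
  obtain ⟨G, hG0, hGsucc⟩ :
      ∃ G : ℕ → (ℕ → Fin n → ℝ) × (ℕ → Fin m → ℝ),
        G 0 = (traj A B x (fun _ => 0), fun _ => 0) ∧
        ∀ i, G (i + 1) = (fun k => (G i).1 k + traj A B (P0 (G i) i) (QQ (G i) i) k,
                          fun k => (G i).2 k + QQ (G i) i k) :=
    ⟨Nat.rec (traj A B x (fun _ => 0), fun _ => 0)
      (fun i S => (fun k => S.1 k + traj A B (P0 S i) (QQ S i) k,
                   fun k => S.2 k + QQ S i k)), rfl, fun _ => rfl⟩
  have hGs1 : ∀ i k, (G (i + 1)).1 k = (G i).1 k + traj A B (P0 (G i) i) (QQ (G i) i) k := by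
    intro i k; rw [hGsucc i]
  have hGs2 : ∀ i k, (G (i + 1)).2 k = (G i).2 k + QQ (G i) i k := by
    intro i k; rw [hGsucc i]
  have g1 : ∀ i k, (G i).1 (k + 1) = A.mulVec ((G i).1 k) + B.mulVec ((G i).2 k) := by
    intro i
    induction i with
    | zero =>
      intro k
      rw [hG0]
      rfl
    | succ i ih =>
      intro k
      rw [hGs1, hGs2, hGs1, ih k, traj_succ]
      simp only [Matrix.mulVec_add]
      abel
  have g2 : ∀ k i, k + 1 ≤ i → C.mulVec ((G i).1 k) + D.mulVec ((G i).2 k) ∈ Y := by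
    intro k i hi
    induction i, hi using Nat.le_induction with
    | base =>
      rw [hGs1, hGs2]
      have heq : C.mulVec ((G k).1 k + traj A B (P0 (G k) k) (QQ (G k) k) k) +
          D.mulVec ((G k).2 k + QQ (G k) k k) =
          (C.mulVec ((G k).1 k) + D.mulVec ((G k).2 k)) +
          (C.mulVec (traj A B (P0 (G k) k) (QQ (G k) k) k) + D.mulVec (QQ (G k) k k)) := by
        simp only [Matrix.mulVec_add]
        abel
      rw [heq]
      exact hs3 (G k) k
    | succ i hi ih =>
      rw [hGs1, hGs2]
      have heq : C.mulVec ((G i).1 k + traj A B (P0 (G i) i) (QQ (G i) i) k) +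
          D.mulVec ((G i).2 k + QQ (G i) i k) =
          (C.mulVec ((G i).1 k) + D.mulVec ((G i).2 k)) +
          (C.mulVec (traj A B (P0 (G i) i) (QQ (G i) i) k) + D.mulVec (QQ (G i) i k)) := by
        simp only [Matrix.mulVec_add]
        abel
      rw [heq, hs2 (G i) i k (by omega), add_zero]
      exact ih
  have g3 : ∀ k i, k + N + 1 ≤ i →
      (G i).1 k = (G (k + N + 1)).1 k ∧ (G i).2 k = (G (k + N + 1)).2 k := by
    intro k i hi
    induction i, hi using Nat.le_induction with
    | base => exact ⟨rfl, rfl⟩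
    | succ i hi ih =>
      rw [hGs1, hGs2, hs4 (G i) i k (by omega), hs5 (G i) i k (by omega), add_zero, add_zero]
      exact ih
  have g4 : ∀ i, ∃ t ∈ Tstar A B C D, (G i).1 0 = x + t := by
    intro i
    induction i with
    | zero =>
      refine ⟨0, zero_mem_Tstar A B C D, ?_⟩
      rw [hG0, add_zero]
      rfl
    | succ i ih =>
      obtain ⟨t, ht, hGt⟩ := ih
      refine ⟨t + P0 (G i) i, Tstar_add A B C D ht (hs1 (G i) i), ?_⟩
      rw [hGs1, hGt, traj_zero, add_assoc]
  obtain ⟨t, ht, hZ0⟩ := g4 (N + 1)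
  refine ⟨t, ht, fun k => (G (k + N + 1)).1 k, ?_, ?_⟩
  · show (G (0 + N + 1)).1 0 = x + t
    rw [show 0 + N + 1 = N + 1 by omega]
    exact hZ0
  · intro k
    refine ⟨(G (k + N + 1)).2 k, g2 k (k + N + 1) (by omega), ?_⟩
    show (G (k + 1 + N + 1)).1 (k + 1) = _
    rw [show k + 1 + N + 1 = k + N + 2 by omega, g1 (k + N + 2) k,
      (g3 k (k + N + 2) (by omega)).1, (g3 k (k + N + 2) (by omega)).2]

end Stmt14

/-- If `𝒦(Σ) + 𝒴 = ℝ^s`, then `(Σ,𝒴)` is reachable iff `R(F) = ℝ^n`. -/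
theorem stmt14 {n m s : ℕ} (A : Matrix (Fin n) (Fin n) ℝ) (B : Matrix (Fin n) (Fin m) ℝ)
    (C : Matrix (Fin s) (Fin n) ℝ) (D : Matrix (Fin s) (Fin m) ℝ)
    (Y : Set (Fin s → ℝ)) (hY : Convex ℝ Y) (h0Y : (0 : Fin s → ℝ) ∈ Y)
    (hsolid : (interior (Y ∩ CDrange C D)).Nonempty)
    (hK : Kset A B C D + Y = Set.univ) :
    XSet (Fmap A B C D Y) ⊆ RSet (Fmap A B C D Y) ↔
      RSet (Fmap A B C D Y) = Set.univ := by
  constructor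
  · intro hXR
    apply Set.eq_univ_iff_forall.mpr
    intro x
    have h0F : (0 : Fin n → ℝ) ∈ Fmap A B C D Y 0 := Stmt14.zero_mem_Fmap A B C D h0Y
    obtain ⟨t, ht, hmem⟩ := Stmt14.xset_cover A B C D h0Y hK ((2 : ℝ) • x)
    have ha : (2 : ℝ) • x + t ∈ RSet (Fmap A B C D Y) := hXR hmem
    have hbT : -t ∈ Tstar A B C D := by
      have := Stmt14.Tstar_smul A B C D (-1) ht
      rwa [neg_one_smul] at this
    have hb : -t ∈ RSet (Fmap A B C D Y) := by
      rw [Stmt14.mem_Tstar_iff] at hbT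
      obtain ⟨ℓ, hℓ, hbT⟩ := hbT
      have hsub : SIter (Fmap A B C D ({0} : Set (Fin s → ℝ))) ℓ 0 ⊆
          SIter (Fmap A B C D Y) ℓ 0 := by
        apply Stmt14.SIter_mono_F
        intro y z hz
        obtain ⟨u, hu, heq⟩ := hz
        refine ⟨u, ?_, heq⟩
        rw [Set.mem_singleton_iff] at hu
        rw [hu]
        exact h0Y
      exact Set.mem_biUnion hℓ (hsub hbT)
    simp only [RSet, Set.mem_iUnion, Set.mem_setOf_eq, exists_prop] at ha hb
    obtain ⟨ℓ₁, hℓ₁, ha⟩ := ha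
    obtain ⟨ℓ₂, hℓ₂, hb⟩ := hb
    have ha' := Stmt14.SIter_subset_of_le h0F (le_max_left ℓ₁ ℓ₂) ha
    have hb' := Stmt14.SIter_subset_of_le h0F (le_max_right ℓ₁ ℓ₂) hb
    have hconv := Stmt14.convex_SIter A B C D hY (max ℓ₁ ℓ₂) ha' hb'
      (by norm_num : (0:ℝ) ≤ 1/2) (by norm_num : (0:ℝ) ≤ 1/2) (by norm_num)
    have hx : (1/2 : ℝ) • ((2 : ℝ) • x + t) + (1/2 : ℝ) • (-t) = x := by module
    rw [hx] at hconv
    exact Set.mem_biUnion (le_trans hℓ₁ (le_max_left _ _)) hconv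
  · intro h
    rw [h]
    exact Set.subset_univ _
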